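/- Fix d ≥ 1 and α ∈ (0,1). The function r(p) = (2/(np)) log(1/α) + (1/(np) + 1/(n(1−p))) d on (0,1) is uniquely minimized at p* = 1 − (√(4d² + 8d log(1/α)) − 2d)/(4 log(1/α)), and p* ∈ (1/2, 1). -/

import Mathlib

open Real Set

/-- The expected squared radius r(p) of the split LRT confidence set is uniquely
minimized over split proportions p ∈ (0,1) at
p* = 1 − (√(4d² + 8d log(1/α)) − 2d)/(4 log(1/α)), and p* ∈ (1/2, 1). -/
theorem stmt_5 (d : ℕ) (hd : 1 ≤ d) (α : ℝ) (hα0 : 0 < α) (hα1 : α < 1)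
    (n : ℝ) (hn : 0 < n)
    (r : ℝ → ℝ)
    (hr : ∀ p, r p = (2 / (n * p)) * Real.log (1 / α)
        + (1 / (n * p) + 1 / (n * (1 - p))) * d)
    (pstar : ℝ)
    (hpstar : pstar = 1 - (Real.sqrt (4 * (d : ℝ) ^ 2 + 8 * d * Real.log (1 / α)) - 2 * d)
        / (4 * Real.log (1 / α))) :
    pstar ∈ Ioo (1 / 2 : ℝ) 1 ∧
      ∀ p ∈ Ioo (0 : ℝ) 1, p ≠ pstar → r pstar < r p := by
  set L := Real.log (1 / α) with hLdef
  have hL : 0 < L := Real.log_pos ((one_lt_div hα0).mpr hα1)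
  have hd1 : (1 : ℝ) ≤ (d : ℝ) := by exact_mod_cast hd
  have hdpos : (0 : ℝ) < (d : ℝ) := by linarith
  set b := Real.sqrt (d : ℝ) with hbdef
  set a := Real.sqrt ((d : ℝ) + 2 * L) with hadef
  have hb2 : b ^ 2 = (d : ℝ) := Real.sq_sqrt hdpos.le
  have ha2 : a ^ 2 = (d : ℝ) + 2 * L := Real.sq_sqrt (by linarith)
  have hb0 : 0 < b := Real.sqrt_pos.mpr hdpos
  have ha0 : 0 < a := Real.sqrt_pos.mpr (by linarith)
  have hba : b < a := by
    have := Real.sqrt_lt_sqrt hdpos.le (show (d : ℝ) < (d : ℝ) + 2 * L by linarith)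
    simpa [hbdef, hadef] using this
  have habpos : 0 < a + b := by linarith
  have hsq : Real.sqrt (4 * (d : ℝ) ^ 2 + 8 * d * L) = 2 * b * a := by
    rw [show (4 * (d : ℝ) ^ 2 + 8 * d * L) = (2 * b * a) ^ 2 by nlinarith [hb2, ha2]]
    exact Real.sqrt_sq (by positivity)
  have hps : pstar = a / (a + b) := by
    rw [hpstar, hsq]
    have h2L : 2 * L = a ^ 2 - b ^ 2 := by rw [ha2, hb2]; ring
    field_simp
    nlinarith [h2L, hb2]
  have hmem : pstar ∈ Ioo (1 / 2 : ℝ) 1 := by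
    rw [hps]
    constructor
    · rw [div_lt_div_iff₀ (by norm_num) habpos]; linarith
    · rw [div_lt_one habpos]; linarith
  refine ⟨hmem, ?_⟩
  have expand : ∀ q : ℝ, q ≠ 0 → 1 - q ≠ 0 →
      r q = a ^ 2 / (n * q) + b ^ 2 / (n * (1 - q)) := by
    intro q hq hq1
    rw [hr, ha2, hb2]
    field_simp
    ring
  rintro p ⟨hp0, hp1⟩ hne
  have h1p : 0 < 1 - p := by linarith
  have hps0 : 0 < pstar := by rw [hps]; positivity
  have hps1 : pstar < 1 := hmem.2
  have h1ps : 0 < 1 - pstar := by linarith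
  have hrs : r pstar = (a + b) ^ 2 / n := by
    rw [expand pstar hps0.ne' h1ps.ne', hps]
    have h1 : (1 : ℝ) - a / (a + b) = b / (a + b) := by
      field_simp
      ring
    rw [h1]
    field_simp
  have hnum : 0 < (a * (1 - p) - b * p) ^ 2 := by
    have h : a * (1 - p) - b * p ≠ 0 := by
      intro h
      apply hne
      rw [hps, eq_div_iff habpos.ne']
      linear_combination -h
    positivity
  have hdiff : (a ^ 2 / (n * p) + b ^ 2 / (n * (1 - p))) - (a + b) ^ 2 / n
      = (a * (1 - p) - b * p) ^ 2 / (n * p * (1 - p)) := by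
    field_simp
    ring
  have hposd : 0 < (a * (1 - p) - b * p) ^ 2 / (n * p * (1 - p)) :=
    div_pos hnum (by positivity)
  rw [expand p hp0.ne' h1p.ne', hrs]
  linarith [hdiff, hposd]
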